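/- For every real t with |t| < π/2, the series ∑_{n=0}^∞ K n 2 · tⁿ/n! converges and its sum equals (3·sin t − t·cos t)/(1 − sin t)²; that is, the exponential generating function for the multiboundary singularities B_n^2 is K_2(t) = (3 sin t − t cos t)/(1 − sin t)². -/

import Mathlib

/-- The Bernoulli–Euler (zigzag, up-down) numbers: `A 0 = 1`, `A 1 = 1`, and
`2 * A (n+1) = ∑ k in range (n+1), (n.choose k) * A k * A (n-k)`. -/
def A : ℕ → ℕ
  | 0 => 1
  | 1 => 1
  | n + 2 =>
      (∑ k ∈ (Finset.range (n + 2)).attach,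
        Nat.choose (n + 1) k.1 * A k.1 * A (n + 1 - k.1)) / 2
decreasing_by
  · have := Finset.mem_range.mp k.2; omega
  · have := Finset.mem_range.mp k.2; omega

/-- `K n l` : number of connected components of the space of very nice
M-morsifications of the multiboundary singularity `B_n^l`, extended by the
recurrence `K n (l+1) = K (n+2) l − (n+2)·l·K (n+2) (l−1)` for `l ≥ 1`,
with `K n 0 = A (n-1)` for `n ≥ 1`, `K n 0 = 0` for `n ≤ 0`,
and `K n 1 = K (n+2) 0`. -/
def K : ℤ → ℕ → ℤ
  | n, 0 => if 1 ≤ n then (A (n - 1).toNat : ℤ) else 0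
  | n, 1 => K (n + 2) 0
  | n, (l + 2) => K (n + 2) (l + 1) - (n + 2) * (l + 1) * K (n + 2) l

open Complex Metric Finset Filter

section Aux

lemma ana_iteratedDeriv {s : Set ℂ} {f : ℂ → ℂ} (hf : AnalyticOnNhd ℂ f s) :
    ∀ n, AnalyticOnNhd ℂ (iteratedDeriv n f) s := by
  intro n
  induction n with
  | zero => simpa [iteratedDeriv_zero] using hf
  | succ n ih => rw [iteratedDeriv_succ]; exact ih.deriv

lemma pascal_sum (n : ℕ) (F G : ℕ → ℂ) :
    ∑ k ∈ range (n+1), (n.choose k : ℂ) * (F (k+1) * G (n-k) + F k * G (n-k+1))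
    = ∑ k ∈ range (n+2), ((n+1).choose k : ℂ) * F k * G (n+1-k) := by
  have hsplit : ∀ k ∈ range (n+1), (n.choose k : ℂ) * (F (k+1) * G (n-k) + F k * G (n-k+1))
      = (n.choose k : ℂ) * F (k+1) * G (n-k) + (n.choose k : ℂ) * F k * G (n+1-k) := by
    intro k hk
    have h : n - k + 1 = n + 1 - k := by have := Finset.mem_range.mp hk; omega
    rw [← h]; ring
  rw [Finset.sum_congr rfl hsplit, Finset.sum_add_distrib]
  have e2 : ∑ k ∈ range (n+1), (n.choose k : ℂ) * F k * G (n+1-k)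
      = ∑ k ∈ range (n+2), (n.choose k : ℂ) * F k * G (n+1-k) := by
    rw [Finset.sum_range_succ (fun k => (n.choose k : ℂ) * F k * G (n+1-k)) (n+1)]
    simp [Nat.choose_succ_self]
  rw [e2, Finset.sum_range_succ' (fun k => (n.choose k : ℂ) * F k * G (n+1-k)) (n+1),
    Finset.sum_range_succ' (fun k => ((n+1).choose k : ℂ) * F k * G (n+1-k)) (n+1)]
  simp only [Nat.succ_sub_succ, Nat.choose_zero_right, Nat.cast_one, Nat.sub_zero]
  rw [← add_assoc, ← Finset.sum_add_distrib]
  congr 1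
  apply Finset.sum_congr rfl
  intro k hk
  rw [Nat.choose_succ_succ]
  push_cast
  ring

lemma leibniz {s : Set ℂ} (hs : IsOpen s) {f g : ℂ → ℂ}
    (hf : AnalyticOnNhd ℂ f s) (hg : AnalyticOnNhd ℂ g s) (n : ℕ) :
    ∀ x ∈ s, iteratedDeriv n (fun z => f z * g z) x
      = ∑ k ∈ range (n + 1),
          (n.choose k : ℂ) * iteratedDeriv k f x * iteratedDeriv (n - k) g x := by
  induction n with
  | zero => intro x hx; simp
  | succ n ih =>
    intro x hx
    rw [iteratedDeriv_succ]
    have h1 : iteratedDeriv n (fun z => f z * g z) =ᶠ[nhds x]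
        (fun y => ∑ k ∈ range (n + 1),
          (n.choose k : ℂ) * iteratedDeriv k f y * iteratedDeriv (n - k) g y) :=
      Filter.eventuallyEq_of_mem (hs.mem_nhds hx) ih
    rw [h1.deriv_eq]
    have hdiff : ∀ k, DifferentiableAt ℂ (iteratedDeriv k f) x ∧
        DifferentiableAt ℂ (iteratedDeriv k g) x := fun k =>
      ⟨(ana_iteratedDeriv hf k x hx).differentiableAt,
       (ana_iteratedDeriv hg k x hx).differentiableAt⟩
    rw [deriv_fun_sum (fun k _ => by
      exact ((((hdiff k).1.const_mul _)).mul (hdiff (n-k)).2))]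
    have hterm : ∀ k ∈ range (n+1),
        deriv (fun y => (n.choose k : ℂ) * iteratedDeriv k f y * iteratedDeriv (n - k) g y) x
        = (n.choose k : ℂ) * (iteratedDeriv (k+1) f x * iteratedDeriv (n - k) g x
            + iteratedDeriv k f x * iteratedDeriv (n - k + 1) g x) := by
      intro k _
      rw [deriv_fun_mul ((hdiff k).1.const_mul _) (hdiff (n-k)).2,
        deriv_const_mul _ (hdiff k).1, iteratedDeriv_succ (n := k),
        iteratedDeriv_succ (n := n - k)]
      ring
    exact (Finset.sum_congr rfl hterm).trans
      (pascal_sum n (fun k => iteratedDeriv k f x) (fun k => iteratedDeriv k g x))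

lemma iteratedDeriv_cmul (c : ℂ) (h : ℂ → ℂ) (n : ℕ) :
    iteratedDeriv n (fun z => c * h z) = fun x => c * iteratedDeriv n h x := by
  induction n generalizing h with
  | zero => simp
  | succ n ih =>
    rw [iteratedDeriv_succ', deriv_const_mul_field', ih, iteratedDeriv_succ']

lemma iteratedDeriv_constant (c : ℂ) (n : ℕ) :
    iteratedDeriv (n+1) (fun _ : ℂ => c) = fun _ => 0 := by
  induction n with
  | zero => ext x; rw [iteratedDeriv_one]; simp
  | succ n ih =>
    rw [iteratedDeriv_succ, ih]
    ext x; simp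

lemma iteratedDeriv_cadd (c : ℂ) (h : ℂ → ℂ) (n : ℕ) :
    iteratedDeriv (n+1) (fun z => c + h z) = iteratedDeriv (n+1) h := by
  rw [iteratedDeriv_succ', deriv_const_add', iteratedDeriv_succ']

lemma iteratedDeriv_iter (m n : ℕ) (f : ℂ → ℂ) :
    iteratedDeriv n (iteratedDeriv m f) = iteratedDeriv (m + n) f := by
  induction n with
  | zero => simp
  | succ n ih => rw [iteratedDeriv_succ, ih, ← iteratedDeriv_succ, Nat.add_assoc]

lemma iteratedDeriv_id_eval (k : ℕ) (x : ℂ) :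
    iteratedDeriv k (fun z : ℂ => z) x = if k = 0 then x else if k = 1 then 1 else 0 := by
  match k with
  | 0 => simp
  | 1 => rw [iteratedDeriv_one]; simp
  | (k+2) =>
    have : iteratedDeriv (k+2) (fun z : ℂ => z) = iteratedDeriv (k+1) (deriv fun z : ℂ => z) := by
      rw [← iteratedDeriv_succ']
    rw [this]
    have h2 : (deriv fun z : ℂ => z) = fun _ : ℂ => (1 : ℂ) := by
      ext y; simp
    rw [h2, iteratedDeriv_constant]
    simp

lemma iteratedDeriv_sub_local {s : Set ℂ} (hs : IsOpen s) {f g : ℂ → ℂ}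
    (hf : AnalyticOnNhd ℂ f s) (hg : AnalyticOnNhd ℂ g s) (n : ℕ) :
    ∀ x ∈ s, iteratedDeriv n (fun z => f z - g z) x
      = iteratedDeriv n f x - iteratedDeriv n g x := by
  induction n with
  | zero => intro x hx; simp
  | succ n ih =>
    intro x hx
    rw [iteratedDeriv_succ]
    have h1 : iteratedDeriv n (fun z => f z - g z) =ᶠ[nhds x]
        (fun y => iteratedDeriv n f y - iteratedDeriv n g y) :=
      Filter.eventuallyEq_of_mem (hs.mem_nhds hx) ih
    rw [h1.deriv_eq, deriv_fun_sub ((ana_iteratedDeriv hf n x hx).differentiableAt)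
      ((ana_iteratedDeriv hg n x hx).differentiableAt), ← iteratedDeriv_succ,
      ← iteratedDeriv_succ]

lemma choose_central_even (b : ℕ) : 2 ∣ Nat.choose (2*(b+1)) (b+1) := by
  have h : 2*(b+1) = (2*b+1) + 1 := by omega
  rw [h, Nat.choose_succ_succ]
  have hsymm : (2*b+1).choose b = (2*b+1).choose (b+1) := by
    have := Nat.choose_symm (n := 2*b+1) (k := b+1) (by omega)
    have hb : 2*b+1 - (b+1) = b := by omega
    rw [hb] at this
    exact this
  simp only [Nat.succ_eq_add_one]
  omega

lemma even_sigma (m : ℕ) (hm : 1 ≤ m) :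
    2 ∣ ∑ k ∈ range (m+1), Nat.choose m k * A k * A (m-k) := by
  rw [← ZMod.natCast_eq_zero_iff _ 2]
  push_cast
  apply Finset.sum_involution (fun a _ => m - a)
  · intro a ha
    have ha' : a ≤ m := by have := Finset.mem_range.mp ha; omega
    have h1 : m - (m - a) = a := by omega
    have h2 : Nat.choose m (m-a) = Nat.choose m a := Nat.choose_symm ha'
    rw [h1, h2]
    have : (Nat.choose m a : ZMod 2) * A (m-a) * A a
        = (Nat.choose m a : ZMod 2) * A a * A (m-a) := by ring
    rw [this]
    exact CharTwo.add_self_eq_zero _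
  · intro a ha hne
    intro heq
    have ha' : a ≤ m := by have := Finset.mem_range.mp ha; omega
    have hma : m = 2 * a := by omega
    obtain ⟨b, rfl⟩ : ∃ b, a = b + 1 := ⟨a - 1, by omega⟩
    apply hne
    obtain ⟨c, hc⟩ := choose_central_even b
    rw [hma, hc]
    push_cast
    rw [show (2 : ZMod 2) = 0 from rfl]
    ring
  · intro a ha
    have := Finset.mem_range.mp ha
    exact Finset.mem_range.mpr (by omega)
  · intro a ha
    have := Finset.mem_range.mp ha
    omega

end Aux

section FC

noncomputable def fC : ℂ → ℂ := fun z => (1 + Complex.sin z) / Complex.cos z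

lemma cos_ne_zero_ball {z : ℂ} (hz : z ∈ ball (0:ℂ) (Real.pi/2)) : Complex.cos z ≠ 0 := by
  intro h
  rw [Complex.cos_eq_zero_iff] at h
  obtain ⟨k, hk⟩ := h
  rw [mem_ball_zero_iff, hk] at hz
  have he : ((2 * (k:ℂ) + 1) * ↑Real.pi / 2) = (((2*(k:ℝ)+1) * Real.pi / 2 : ℝ) : ℂ) := by
    push_cast; ring
  rw [he, Complex.norm_real, Real.norm_eq_abs] at hz
  have hpi := Real.pi_pos
  have h1 : (1:ℝ) ≤ |2*(k:ℝ)+1| := by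
    have h0 : (2*k+1 : ℤ) ≠ 0 := by omega
    have := Int.one_le_abs h0
    calc (1:ℝ) ≤ |((2*k+1 : ℤ) : ℝ)| := by
          rw [← Int.cast_abs]; exact_mod_cast this
      _ = |2*(k:ℝ)+1| := by push_cast; ring_nf
  rw [abs_div, abs_mul, abs_of_pos hpi] at hz
  have : |(2:ℝ)| = 2 := by norm_num
  rw [this] at hz
  nlinarith [abs_nonneg (2*(k:ℝ)+1)]

lemma fC_diffOn : DifferentiableOn ℂ fC (ball (0:ℂ) (Real.pi/2)) :=
  DifferentiableOn.div
    (((Complex.differentiable_sin).const_add 1).differentiableOn)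
    (Complex.differentiable_cos.differentiableOn)
    (fun _ hz => cos_ne_zero_ball hz)

lemma fC_ana : AnalyticOnNhd ℂ fC (ball (0:ℂ) (Real.pi/2)) :=
  fC_diffOn.analyticOnNhd isOpen_ball

lemma fC_hasDerivAt {z : ℂ} (hz : Complex.cos z ≠ 0) :
    HasDerivAt fC ((1 + Complex.sin z) / Complex.cos z ^ 2) z := by
  have h := (((Complex.hasDerivAt_sin z).const_add 1).div (Complex.hasDerivAt_cos z) hz)
  refine h.congr_deriv ?_; symm
  have hp := Complex.sin_sq_add_cos_sq z
  field_simp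
  linear_combination -hp

lemma two_deriv_fC {z : ℂ} (hz : z ∈ ball (0:ℂ) (Real.pi/2)) :
    2 * deriv fC z = 1 + fC z * fC z := by
  have hc := cos_ne_zero_ball hz
  rw [(fC_hasDerivAt hc).deriv]
  have hp := Complex.sin_sq_add_cos_sq z
  unfold fC
  field_simp
  linear_combination -hp

end FC

section DA

lemma zero_mem_ball : (0:ℂ) ∈ ball (0:ℂ) (Real.pi/2) :=
  mem_ball_self (by positivity)

lemma fC_zero : fC 0 = 1 := by simp [fC]

lemma rec2 (n : ℕ) : 2 * iteratedDeriv (n+1) fC 0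
    = iteratedDeriv n (fun z => 1 + fC z * fC z) 0 := by
  have h1 : iteratedDeriv n (fun z => 2 * deriv fC z) 0
      = 2 * iteratedDeriv n (deriv fC) 0 := by rw [iteratedDeriv_cmul]
  have h2 : (fun z => 2 * deriv fC z) =ᶠ[nhds 0] (fun z => 1 + fC z * fC z) :=
    Filter.eventuallyEq_of_mem (isOpen_ball.mem_nhds zero_mem_ball)
      (fun z hz => two_deriv_fC hz)
  rw [iteratedDeriv_succ', ← h1, Filter.EventuallyEq.iteratedDeriv_eq n h2]

lemma dA : ∀ n, iteratedDeriv n fC 0 = (A n : ℂ) := by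
  intro n
  induction n using Nat.strong_induction_on with
  | _ n ih =>
  rcases n with (_ | (_ | m))
  · rw [iteratedDeriv_zero, fC_zero]
    norm_num [A]
  · have h := rec2 0
    rw [iteratedDeriv_zero] at h
    simp only [fC_zero, mul_one] at h
    have hA1 : A 1 = 1 := by rw [A]
    rw [hA1]
    push_cast
    linear_combination h / 2
  · have h := rec2 (m+1)
    rw [iteratedDeriv_cadd 1 (fun z => fC z * fC z) m] at h
    rw [leibniz isOpen_ball fC_ana fC_ana (m+1) 0 zero_mem_ball] at h
    have hsum : (∑ k ∈ range (m+1+1), ((m+1).choose k : ℂ)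
          * iteratedDeriv k fC 0 * iteratedDeriv (m+1-k) fC 0)
        = ((∑ k ∈ range (m+2), Nat.choose (m+1) k * A k * A (m+1-k) : ℕ) : ℂ) := by
      rw [Nat.cast_sum]
      apply Finset.sum_congr rfl
      intro k hk
      have hk' := Finset.mem_range.mp hk
      rw [ih k (by omega), ih (m+1-k) (by omega)]
      push_cast
      ring
    rw [hsum] at h
    obtain ⟨c, hc⟩ := even_sigma (m+1) (by omega)
    have hA : A (m+2) = c := by
      rw [A, Finset.sum_attach (Finset.range (m+2))
        (fun k => Nat.choose (m+1) k * A k * A (m+1-k)), hc]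
      omega
    rw [hc] at h
    push_cast at h
    rw [show m+1+1 = m+2 from rfl] at h
    rw [hA]
    linear_combination h / 2

end DA

section HigherDeriv

noncomputable def g1 : ℂ → ℂ := fun z => (1 + Complex.sin z) / Complex.cos z ^ 2
noncomputable def g2 : ℂ → ℂ := fun z => (1 + Complex.sin z) ^ 2 / Complex.cos z ^ 3
noncomputable def g3 : ℂ → ℂ :=
  fun z => (1 + Complex.sin z) ^ 2 * (2 + Complex.sin z) / Complex.cos z ^ 4

lemma g1_hasDerivAt {z : ℂ} (hz : Complex.cos z ≠ 0) : HasDerivAt g1 (g2 z) z := by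
  have h := (((Complex.hasDerivAt_sin z).const_add 1).div
    ((Complex.hasDerivAt_cos z).pow 2) (pow_ne_zero 2 hz))
  refine h.congr_deriv ?_; symm
  have hp := Complex.sin_sq_add_cos_sq z
  unfold g2
  simp only [Pi.pow_apply]
  field_simp
  linear_combination (-Complex.cos z) * hp

lemma g2_hasDerivAt {z : ℂ} (hz : Complex.cos z ≠ 0) : HasDerivAt g2 (g3 z) z := by
  have h := ((((Complex.hasDerivAt_sin z).const_add 1).pow 2).div
    ((Complex.hasDerivAt_cos z).pow 3) (pow_ne_zero 3 hz))
  refine h.congr_deriv ?_; symm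
  have hp := Complex.sin_sq_add_cos_sq z
  unfold g3
  simp only [Pi.pow_apply]
  field_simp
  linear_combination (-2 * Complex.cos z ^ 2 * (1 + Complex.sin z)) * hp

lemma deriv_fC_eq {z : ℂ} (hz : z ∈ ball (0:ℂ) (Real.pi/2)) : deriv fC z = g1 z :=
  (fC_hasDerivAt (cos_ne_zero_ball hz)).deriv

lemma iteratedDeriv_two_fC {z : ℂ} (hz : z ∈ ball (0:ℂ) (Real.pi/2)) :
    iteratedDeriv 2 fC z = g2 z := by
  have h1 : deriv fC =ᶠ[nhds z] g1 :=
    Filter.eventuallyEq_of_mem (isOpen_ball.mem_nhds hz) (fun y hy => deriv_fC_eq hy)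
  rw [iteratedDeriv_succ, iteratedDeriv_one, h1.deriv_eq]
  exact (g1_hasDerivAt (cos_ne_zero_ball hz)).deriv

lemma iteratedDeriv_three_fC {z : ℂ} (hz : z ∈ ball (0:ℂ) (Real.pi/2)) :
    iteratedDeriv 3 fC z = g3 z := by
  have h1 : iteratedDeriv 2 fC =ᶠ[nhds z] g2 :=
    Filter.eventuallyEq_of_mem (isOpen_ball.mem_nhds hz) (fun y hy => iteratedDeriv_two_fC hy)
  rw [iteratedDeriv_succ, h1.deriv_eq]
  exact (g2_hasDerivAt (cos_ne_zero_ball hz)).deriv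

end HigherDeriv

section MainSec

noncomputable def FF : ℂ → ℂ :=
  fun z => iteratedDeriv 3 fC z - z * iteratedDeriv 2 fC z - 2 * deriv fC z

lemma ana1C : AnalyticOnNhd ℂ (deriv fC) (ball (0:ℂ) (Real.pi/2)) := fC_ana.deriv
lemma ana2C : AnalyticOnNhd ℂ (iteratedDeriv 2 fC) (ball (0:ℂ) (Real.pi/2)) :=
  ana_iteratedDeriv fC_ana 2
lemma ana3C : AnalyticOnNhd ℂ (iteratedDeriv 3 fC) (ball (0:ℂ) (Real.pi/2)) :=
  ana_iteratedDeriv fC_ana 3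

lemma FF_ana : AnalyticOnNhd ℂ FF (ball (0:ℂ) (Real.pi/2)) :=
  (ana3C.sub (analyticOnNhd_id.mul ana2C)).sub (analyticOnNhd_const.mul ana1C)

lemma FF_coeff (n : ℕ) :
    iteratedDeriv n FF 0 = (A (n+3) : ℂ) - n * A (n+1) - 2 * A (n+1) := by
  have e1 := iteratedDeriv_sub_local (f := fun z => iteratedDeriv 3 fC z - z * iteratedDeriv 2 fC z)
    (g := fun z => 2 * deriv fC z) isOpen_ball
    (ana3C.sub (analyticOnNhd_id.mul ana2C)) (analyticOnNhd_const.mul ana1C) n 0 zero_mem_ball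
  have e2 := iteratedDeriv_sub_local (f := fun z => iteratedDeriv 3 fC z)
    (g := fun z => z * iteratedDeriv 2 fC z) isOpen_ball
    ana3C (analyticOnNhd_id.mul ana2C) n 0 zero_mem_ball
  have e3 : iteratedDeriv n (iteratedDeriv 3 fC) 0 = (A (n+3) : ℂ) := by
    rw [iteratedDeriv_iter, show 3 + n = n + 3 from by omega, dA]
  have e4 : iteratedDeriv n (fun z => 2 * deriv fC z) 0 = 2 * (A (n+1) : ℂ) := by
    rw [iteratedDeriv_cmul]
    show 2 * iteratedDeriv n (deriv fC) 0 = _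
    rw [show deriv fC = iteratedDeriv 1 fC from (iteratedDeriv_one).symm,
      iteratedDeriv_iter, show 1 + n = n + 1 from by omega, dA]
  have e5 : iteratedDeriv n (fun z => z * iteratedDeriv 2 fC z) 0 = (n : ℂ) * A (n+1) := by
    rw [leibniz isOpen_ball analyticOnNhd_id ana2C n 0 zero_mem_ball]
    cases n with
    | zero => simp
    | succ m =>
      rw [Finset.sum_eq_single 1]
      · rw [Nat.choose_one_right, iteratedDeriv_id_eval, iteratedDeriv_iter,
          show m + 1 - 1 = m from by omega, show 2 + m = m + 2 from by omega, dA]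
        norm_num
      · intro b hb hb1
        rw [iteratedDeriv_id_eval]
        rcases b with (_ | (_ | b))
        · simp
        · exact absurd rfl hb1
        · norm_num
      · intro h
        exact absurd (Finset.mem_range.mpr (by omega)) h
  beta_reduce at e1 e2
  unfold FF
  rw [e1, e2, e3, e4, e5]

lemma K_two_eval (n : ℕ) :
    K (n : ℤ) 2 = (A (n+3) : ℤ) - (n+2) * (A (n+1) : ℤ) := by
  simp only [K]
  rw [if_pos (show (1:ℤ) ≤ (n:ℤ) + 2 + 2 by omega), if_pos (show (1:ℤ) ≤ (n:ℤ) + 2 by omega),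
    show ((n:ℤ) + 2 + 2 - 1).toNat = n + 3 from by omega,
    show ((n:ℤ) + 2 - 1).toNat = n + 1 from by omega]
  ring

open Real in
/-- The exponential generating function for the multiboundary singularities `B_n^2`:
for `|t| < π/2`, `∑ K n 2 · tⁿ/n! = (3 sin t − t cos t)/(1 − sin t)²`. -/
theorem egf_K_two (t : ℝ) (ht : |t| < π / 2) :
    HasSum (fun n : ℕ => (K n 2 : ℝ) * t ^ n / n.factorial)
      ((3 * Real.sin t - t * Real.cos t) / (1 - Real.sin t) ^ 2) := by
  have hT : (t : ℂ) ∈ ball (0:ℂ) (Real.pi/2) := by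
    rw [mem_ball_zero_iff, Complex.norm_real, Real.norm_eq_abs]
    exact ht
  have hc : Real.cos t ≠ 0 := by
    have h' := abs_lt.mp ht
    exact (Real.cos_pos_of_mem_Ioo ⟨h'.1, h'.2⟩).ne'
  have hpy := Real.sin_sq_add_cos_sq t
  have h1s : (1 : ℝ) - Real.sin t ≠ 0 := by
    intro h
    apply hc
    have hc2 : Real.cos t ^ 2 = 0 := by nlinarith
    exact pow_eq_zero_iff (n := 2) (by norm_num) |>.mp hc2
  have H := Complex.hasSum_taylorSeries_on_ball (FF_ana.differentiableOn) hT
  simp only [sub_zero] at H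
  have Hterm : (fun n : ℕ => (n.factorial : ℂ)⁻¹ • ((t:ℂ)) ^ n • iteratedDeriv n FF 0)
      = (fun n : ℕ => (((K n 2 : ℝ) * t ^ n / n.factorial : ℝ) : ℂ)) := by
    funext n
    rw [FF_coeff n, smul_eq_mul, smul_eq_mul]
    have hfact : (n.factorial : ℂ) ≠ 0 := by
      exact_mod_cast n.factorial_ne_zero
    push_cast [K_two_eval n]
    field_simp
    ring
  rw [Hterm] at H
  have hval : FF (t:ℂ) = (((3 * Real.sin t - t * Real.cos t) / (1 - Real.sin t) ^ 2 : ℝ) : ℂ) := by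
    unfold FF
    rw [iteratedDeriv_three_fC hT, iteratedDeriv_two_fC hT, deriv_fC_eq hT]
    unfold g1 g2 g3
    rw [← Complex.ofReal_sin, ← Complex.ofReal_cos]
    have hcC : ((Real.cos t : ℂ)) ≠ 0 := by exact_mod_cast hc
    have hreal : (1 + Real.sin t)^2 * (2 + Real.sin t)/Real.cos t^4
        - t * ((1+Real.sin t)^2/Real.cos t^3) - 2*((1+Real.sin t)/Real.cos t^2)
        = (3*Real.sin t - t*Real.cos t)/(1 - Real.sin t)^2 := by
      field_simp
      linear_combination (-(3*Real.sin t - Real.cos t*t)*Real.cos t^2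
        - (1 - Real.sin t^2)*(2 + Real.sin t - Real.cos t*t)) * hpy
    calc (1 + (Real.sin t:ℂ)) ^ 2 * (2 + (Real.sin t:ℂ)) / (Real.cos t:ℂ) ^ 4 -
          (t:ℂ) * ((1 + (Real.sin t:ℂ)) ^ 2 / (Real.cos t:ℂ) ^ 3) -
          2 * ((1 + (Real.sin t:ℂ)) / (Real.cos t:ℂ) ^ 2)
        = (((1 + Real.sin t)^2 * (2 + Real.sin t)/Real.cos t^4
            - t * ((1+Real.sin t)^2/Real.cos t^3)
            - 2*((1+Real.sin t)/Real.cos t^2) : ℝ) : ℂ) := by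
          push_cast; ring
      _ = _ := by rw [hreal]
  rw [hval] at H
  have := ((Complex.hasSum_iff _ _).mp H).1
  simpa only [Complex.ofReal_re] using this

end MainSec
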